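/- Let D ⊆ V be a coherent set of desirable options and fix o in the topological interior of the positive cone {x : x ≻ 0}. Define u_o(x) := sup{α ∈ ℝ : x - αo ∈ D}. Then u_o is a bounded superlinear real functional, u_o(x) ≥ 0 for all x ∈ D, and u_o(y) ≤ 0 for all y ∉ D. -/

import Mathlib

theorem stmt9 {V : Type*} [NormedAddCommGroup V] [NormedSpace ℝ V] [CompleteSpace V]
    (gt : V → V → Prop)
    (hirr : ∀ x : V, ¬ gt x x)
    (htrans : ∀ x y z : V, gt x y → gt y z → gt x z)
    (haddc : ∀ x y z : V, gt x y → gt (x + z) (y + z))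
    (hsmulc : ∀ (x y : V) (c : ℝ), 0 < c → gt x y → gt (c • x) (c • y))
    (hdual : ∃ f : V →L[ℝ] ℝ, ∀ x : V, gt x 0 → 0 < f x)
    (D : Set V)
    (hD0 : (0 : V) ∉ D)
    (hDcone : ∀ x ∈ D, ∀ y ∈ D, ∀ l m : ℝ, 0 ≤ l → 0 ≤ m → 0 < l + m → l • x + m • y ∈ D)
    (hDpos : {x : V | gt x 0} ⊆ D)
    (o : V) (ho : o ∈ interior {x : V | gt x 0}) :
    (∀ x y : V,
        (fun z : V => sSup {α : ℝ | z - α • o ∈ D}) x +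
          (fun z : V => sSup {α : ℝ | z - α • o ∈ D}) y ≤
        (fun z : V => sSup {α : ℝ | z - α • o ∈ D}) (x + y)) ∧
    (∀ (x : V) (c : ℝ), 0 ≤ c →
        (fun z : V => sSup {α : ℝ | z - α • o ∈ D}) (c • x) =
          c * (fun z : V => sSup {α : ℝ | z - α • o ∈ D}) x) ∧
    (∃ K : ℝ, ∀ x : V, |(fun z : V => sSup {α : ℝ | z - α • o ∈ D}) x| ≤ K * ‖x‖) ∧
    (∀ x ∈ D, 0 ≤ (fun z : V => sSup {α : ℝ | z - α • o ∈ D}) x) ∧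
    (∀ y ∉ D, (fun z : V => sSup {α : ℝ | z - α • o ∈ D}) y ≤ 0) := by
  obtain ⟨ε, hε, hball⟩ : ∃ ε > 0, Metric.ball o ε ⊆ {x | gt x 0} := by
    rcases Metric.isOpen_iff.mp isOpen_interior o ho with ⟨ε, hε, h⟩
    exact ⟨ε, hε, h.trans interior_subset⟩
  have ho0 : o ∈ {x : V | gt x 0} := interior_subset ho
  have hoD : o ∈ D := hDpos ho0
  have hscale : ∀ z ∈ D, ∀ c : ℝ, 0 < c → c • z ∈ D := by
    intro z hz c hc
    have := hDcone z hz z hz c 0 hc.le le_rfl (by linarith)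
    simpa using this
  have haddD : ∀ z ∈ D, ∀ w ∈ D, z + w ∈ D := by
    intro z hz w hw
    have := hDcone z hz w hw 1 1 zero_le_one zero_le_one (by norm_num)
    simpa using this
  have hmem : ∀ x : V, ∀ t : ℝ, ‖x‖ / ε < t → (-t) ∈ {α : ℝ | x - α • o ∈ D} := by
    intro x t ht
    have ht0 : 0 < t := lt_of_le_of_lt (div_nonneg (norm_nonneg x) hε.le) ht
    have h1 : o + t⁻¹ • x ∈ Metric.ball o ε := by
      rw [Metric.mem_ball, dist_eq_norm]
      have : o + t⁻¹ • x - o = t⁻¹ • x := by abel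
      rw [this, norm_smul, Real.norm_eq_abs, abs_of_pos (inv_pos.2 ht0)]
      rw [inv_mul_lt_iff₀ ht0]
      rw [div_lt_iff₀ hε] at ht
      linarith [mul_comm t ε]
    have h2 : t • (o + t⁻¹ • x) ∈ D := hscale _ (hDpos (hball h1)) t ht0
    have h3 : t • (o + t⁻¹ • x) = x + t • o := by
      rw [smul_add, smul_inv_smul₀ ht0.ne']; abel
    show x - (-t) • o ∈ D
    have h4 : x - (-t) • o = x + t • o := by
      rw [neg_smul]; abel
    rw [h4, ← h3]; exact h2
  have hub : ∀ x : V, ∀ α ∈ {α : ℝ | x - α • o ∈ D}, α ≤ ‖x‖ / ε := by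
    intro x α hα
    by_contra hc
    push_neg at hc
    have hα0 : 0 < α := lt_of_le_of_lt (div_nonneg (norm_nonneg x) hε.le) hc
    have h1 : o - α⁻¹ • x ∈ Metric.ball o ε := by
      rw [Metric.mem_ball, dist_eq_norm]
      have : o - α⁻¹ • x - o = -(α⁻¹ • x) := by abel
      rw [this, norm_neg, norm_smul, Real.norm_eq_abs, abs_of_pos (inv_pos.2 hα0)]
      rw [inv_mul_lt_iff₀ hα0]
      rw [div_lt_iff₀ hε] at hc
      linarith [mul_comm α ε]
    have h3 : gt (α • (o - α⁻¹ • x)) (α • (0 : V)) := hsmulc _ _ _ hα0 (hball h1)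
    have h4 : α • o - x ∈ D := by
      apply hDpos
      have h5 : α • (o - α⁻¹ • x) = α • o - x := by
        rw [smul_sub, smul_inv_smul₀ hα0.ne']
      show gt (α • o - x) 0
      rw [← h5]
      simpa using h3
    have h6 := haddD _ hα _ h4
    have h7 : x - α • o + (α • o - x) = 0 := by abel
    rw [h7] at h6
    exact hD0 h6
  have hBdd : ∀ x : V, BddAbove {α : ℝ | x - α • o ∈ D} :=
    fun x => ⟨‖x‖ / ε, fun α hα => hub x α hα⟩
  have hNe : ∀ x : V, Set.Nonempty {α : ℝ | x - α • o ∈ D} :=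
    fun x => ⟨-(‖x‖ / ε + 1), hmem x _ (by linarith)⟩
  have hup : ∀ x : V, sSup {α : ℝ | x - α • o ∈ D} ≤ ‖x‖ / ε :=
    fun x => csSup_le (hNe x) (hub x)
  have hlow : ∀ x : V, -(‖x‖ / ε) ≤ sSup {α : ℝ | x - α • o ∈ D} := by
    intro x
    by_contra hc
    push_neg at hc
    obtain ⟨t, h1, h2⟩ := exists_between (show ‖x‖ / ε < -sSup {α : ℝ | x - α • o ∈ D} by linarith)
    have := le_csSup (hBdd x) (hmem x t h1)
    linarith
  refine ⟨?_, ?_, ?_, ?_, ?_⟩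
  · -- superadditive
    intro x y
    simp only
    have key : ∀ a ∈ {α : ℝ | x - α • o ∈ D}, ∀ b ∈ {α : ℝ | y - α • o ∈ D},
        a + b ∈ {α : ℝ | x + y - α • o ∈ D} := by
      intro a ha b hb
      have := haddD _ ha _ hb
      have heq : x - a • o + (y - b • o) = x + y - (a + b) • o := by
        rw [add_smul]; abel
      rw [heq] at this
      exact this
    have h1 : ∀ a ∈ {α : ℝ | x - α • o ∈ D},
        a + sSup {α : ℝ | y - α • o ∈ D} ≤ sSup {α : ℝ | x + y - α • o ∈ D} := by
      intro a ha
      have h2 : ∀ b ∈ {α : ℝ | y - α • o ∈ D}, b ≤ sSup {α : ℝ | x + y - α • o ∈ D} - a := by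
        intro b hb
        have := le_csSup (hBdd (x + y)) (key a ha b hb)
        linarith
      have := csSup_le (hNe y) h2
      linarith
    have h3 : ∀ a ∈ {α : ℝ | x - α • o ∈ D},
        a ≤ sSup {α : ℝ | x + y - α • o ∈ D} - sSup {α : ℝ | y - α • o ∈ D} := by
      intro a ha; have := h1 a ha; linarith
    have := csSup_le (hNe x) h3
    linarith
  · -- homogeneous
    intro x c hc
    simp only
    rcases hc.eq_or_lt with h0 | hpos
    · subst h0
      rw [zero_mul, zero_smul]
      have hsub : ∀ α ∈ {α : ℝ | (0 : V) - α • o ∈ D}, α ≤ 0 := by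
        intro α hα
        by_contra hc'
        push_neg at hc'
        have hα' : -(α • o) ∈ D := by simpa using hα
        have h6 := haddD _ hα' _ (hscale o hoD α hc')
        simp at h6
        exact hD0 h6
      have h1 : sSup {α : ℝ | (0 : V) - α • o ∈ D} ≤ 0 := csSup_le (hNe 0) hsub
      have h2 := hlow 0
      rw [norm_zero, zero_div, neg_zero] at h2
      linarith
    · have hdir : ∀ a ∈ {α : ℝ | x - α • o ∈ D}, c * a ∈ {α : ℝ | c • x - α • o ∈ D} := by
        intro a ha
        have := hscale _ ha c hpos
        have heq : c • (x - a • o) = c • x - (c * a) • o := by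
          rw [smul_sub, mul_smul]
        rw [heq] at this
        exact this
      have hdir2 : ∀ b ∈ {α : ℝ | c • x - α • o ∈ D}, c⁻¹ * b ∈ {α : ℝ | x - α • o ∈ D} := by
        intro b hb
        have := hscale _ hb c⁻¹ (inv_pos.2 hpos)
        have heq : c⁻¹ • (c • x - b • o) = x - (c⁻¹ * b) • o := by
          rw [smul_sub, smul_smul, inv_mul_cancel₀ hpos.ne', one_smul, mul_smul]
        rw [heq] at this
        exact this
      apply le_antisymm
      · apply csSup_le (hNe (c • x))
        intro b hb
        have h1 := le_csSup (hBdd x) (hdir2 b hb)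
        have : b = c * (c⁻¹ * b) := by field_simp
        rw [this]
        exact mul_le_mul_of_nonneg_left h1 hpos.le
      · have h1 : ∀ a ∈ {α : ℝ | x - α • o ∈ D}, a ≤ sSup {α : ℝ | c • x - α • o ∈ D} / c := by
          intro a ha
          rw [le_div_iff₀ hpos]
          have := le_csSup (hBdd (c • x)) (hdir a ha)
          linarith [mul_comm a c]
        have h2 := csSup_le (hNe x) h1
        rw [le_div_iff₀ hpos] at h2
        linarith [mul_comm (sSup {α : ℝ | x - α • o ∈ D}) c]
  · -- bounded
    refine ⟨ε⁻¹, fun x => ?_⟩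
    simp only
    have h1 := hlow x
    have h2 := hup x
    have h3 : ‖x‖ / ε = ε⁻¹ * ‖x‖ := by rw [div_eq_mul_inv, mul_comm]
    rw [abs_le]
    constructor <;> linarith
  · -- nonneg on D
    intro x hx
    simp only
    by_contra hc
    push_neg at hc
    have ht : 0 < -sSup {α : ℝ | x - α • o ∈ D} / 2 := by linarith
    set t := -sSup {α : ℝ | x - α • o ∈ D} / 2 with htdef
    have hmemt : -t ∈ {α : ℝ | x - α • o ∈ D} := by
      show x - (-t) • o ∈ D
      have h4 : x - (-t) • o = x + t • o := by rw [neg_smul]; abel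
      rw [h4]
      exact haddD _ hx _ (hscale o hoD t ht)
    have := le_csSup (hBdd x) hmemt
    rw [htdef] at this
    linarith
  · -- nonpos off D
    intro y hy
    simp only
    apply csSup_le (hNe y)
    intro α hα
    by_contra hc
    push_neg at hc
    have h1 := haddD _ hα _ (hscale o hoD α hc)
    have h2 : y - α • o + α • o = y := by abel
    rw [h2] at h1
    exact hy h1
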